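/- Ideals generated by symmetric π-eigenvectors are stable under the polynomial representation: π is a ring homomorphism of 𝒳; if f ∈ 𝒳 satisfies s(f) = f, then T(f·g) = f·T(g) for all g ∈ 𝒳; consequently, if in addition π(f) = c·f for some c ∈ R, then the principal ideal f·𝒳 is stable under T, π, Y = π∘T, and multiplication by X. In particular, if q^N = 1 in R for some N ∈ ℕ, then π(X^N + X^{−N}) = q^{N/2}(X^N + X^{−N}), so the ideal generated by X^N + X^{−N} is stable under all of these operators. -/

import Mathlib

open LaurentPolynomial

section
open Polynomial

variable {R : Type*} [CommRing R]

lemma myC_mul_eq_smul (a : R) (f : R[T;T⁻¹]) : LaurentPolynomial.C a * f = a • f := by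
  rw [LaurentPolynomial.C_eq_algebraMap, ← Algebra.smul_def]

lemma myreg {h : R[T;T⁻¹]} (hh : (T 2 - 1) * h = 0) : h = 0 := by
  obtain ⟨n, p, hp⟩ := exists_T_pow h
  have h1 : (Polynomial.toLaurent : R[X] →+* R[T;T⁻¹]) ((X ^ 2 - 1) * p) = 0 := by
    rw [map_mul, map_sub, Polynomial.toLaurent_X_pow, Polynomial.toLaurent_one, hp,
      ← mul_assoc]
    norm_num
    rw [hh, zero_mul]
  have h2 : (X ^ 2 - 1 : R[X]) * p = 0 := Polynomial.toLaurent_injective (by simpa using h1)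
  have hm : (X ^ 2 - 1 : R[X]).Monic := by
    simpa using Polynomial.monic_X_pow_sub_C (1 : R) (two_ne_zero)
  have hp0 : p = 0 := hm.isRegular.left (by simpa using h2)
  have h3 : h * T (n : ℤ) = 0 := by rw [← hp, hp0, map_zero]
  calc h = h * T (n : ℤ) * T (-(n : ℤ)) := by
        rw [mul_assoc, ← T_add, add_neg_cancel, T_zero, mul_one]
  _ = 0 := by rw [h3, zero_mul]

lemma mymul (L : Module.End R (LaurentPolynomial R)) (u : ℤ → R)
    (hu : ∀ m n, u (m + n) = u m * u n)
    (hL : ∀ n : ℤ, L (T n) = u n • T (-n)) (f g : R[T;T⁻¹]) :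
    L (f * g) = L f * L g := by
  induction f using LaurentPolynomial.induction_on' with
  | add p r hp hr => simp [add_mul, map_add, hp, hr]
  | C_mul_T m a =>
    induction g using LaurentPolynomial.induction_on' with
    | add p r hp hr => simp [mul_add, map_add, hp, hr]
    | C_mul_T n b =>
      rw [myC_mul_eq_smul, myC_mul_eq_smul, smul_mul_assoc, mul_smul_comm, ← T_add,
        map_smul, map_smul, map_smul, map_smul, hL, hL, hL, hu, neg_add,
        smul_mul_assoc, smul_mul_assoc, mul_smul_comm, mul_smul_comm, ← T_add,
        smul_smul, smul_smul, smul_smul, smul_smul, smul_smul]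
      congr 1
      ring

lemma myTT (t2 : Rˣ) (s TT : Module.End R (LaurentPolynomial R))
    (hsm : ∀ f g : R[T;T⁻¹], s (f * g) = s f * s g)
    (hT : ∀ f : LaurentPolynomial R,
      (T 2 - 1) * (TT f - (t2 : R) • s f) =
        ((t2 : R) - ((t2⁻¹ : Rˣ) : R)) • (s f - f))
    (f : LaurentPolynomial R) (hsf : s f = f) (g : LaurentPolynomial R) :
    TT (f * g) = f * TT g := by
  have hsfg : s (f * g) = f * s g := by rw [hsm, hsf]
  have hD : (T 2 - 1) * (TT (f * g) - (t2 : R) • s (f * g) - f * (TT g - (t2 : R) • s g)) = 0 := by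
    rw [mul_sub, hT, mul_left_comm, hT, hsfg, mul_smul_comm, mul_sub, sub_self]
  have h3 : TT (f * g) - (t2 : R) • s (f * g) = f * (TT g - (t2 : R) • s g) :=
    sub_eq_zero.mp (myreg hD)
  calc TT (f * g) = (TT (f * g) - (t2 : R) • s (f * g)) + (t2 : R) • s (f * g) := by
        rw [sub_add_cancel]
  _ = f * TT g := by rw [h3, hsfg, mul_sub, mul_smul_comm, sub_add_cancel]




end

/-- Ideals generated by symmetric `π`-eigenvectors are stable under the polynomial
representation of the type `A₁` DAHA. Here `s`, `π` are the `R`-linear operators on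
`𝒳 = R[X,X⁻¹]` with `s(Xⁿ) = X⁻ⁿ`, `π(Xⁿ) = q^{n/2}X⁻ⁿ`, and `TT` is the
Demazure–Lusztig operator (encoded by `hT` as in the definition
`TT f = t^{1/2} s f + (t^{1/2} − t^{−1/2}) g_f`, `(X²−1) g_f = s f − f`). -/
theorem stmt1 (R : Type*) [CommRing R] (q2 t2 : Rˣ)
    (s π TT : Module.End R (LaurentPolynomial R))
    (hs : ∀ n : ℤ, s (T n) = T (-n))
    (hπ : ∀ n : ℤ, π (T n) = ((q2 ^ n : Rˣ) : R) • T (-n))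
    (hT : ∀ f : LaurentPolynomial R,
      (T 2 - 1) * (TT f - (t2 : R) • s f) =
        ((t2 : R) - ((t2⁻¹ : Rˣ) : R)) • (s f - f)) :
    -- π is a ring homomorphism of 𝒳
    (π (1 : LaurentPolynomial R) = 1 ∧
      ∀ f g : LaurentPolynomial R, π (f * g) = π f * π g) ∧
    -- if s(f) = f then T(f·g) = f·T(g)
    (∀ f : LaurentPolynomial R, s f = f →
      ∀ g : LaurentPolynomial R, TT (f * g) = f * TT g) ∧
    -- if moreover π(f) = c·f then the principal ideal (f) is stable under T, π, Y, X
    (∀ f : LaurentPolynomial R, s f = f → ∀ c : R, π f = c • f →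
      ∀ x ∈ Ideal.span ({f} : Set (LaurentPolynomial R)),
        TT x ∈ Ideal.span ({f} : Set (LaurentPolynomial R)) ∧
        π x ∈ Ideal.span ({f} : Set (LaurentPolynomial R)) ∧
        π (TT x) ∈ Ideal.span ({f} : Set (LaurentPolynomial R)) ∧
        T 1 * x ∈ Ideal.span ({f} : Set (LaurentPolynomial R))) ∧
    -- the particular case f = X^N + X^{−N} when q^N = 1
    (∀ N : ℕ, (q2 : R) ^ (2 * N) = 1 →
      π (T (N : ℤ) + T (-(N : ℤ))) =
        ((q2 ^ (N : ℤ) : Rˣ) : R) • (T (N : ℤ) + T (-(N : ℤ))) ∧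
      ∀ x ∈ Ideal.span ({T (N : ℤ) + T (-(N : ℤ))} : Set (LaurentPolynomial R)),
        TT x ∈ Ideal.span ({T (N : ℤ) + T (-(N : ℤ))} : Set (LaurentPolynomial R)) ∧
        π x ∈ Ideal.span ({T (N : ℤ) + T (-(N : ℤ))} : Set (LaurentPolynomial R)) ∧
        π (TT x) ∈ Ideal.span ({T (N : ℤ) + T (-(N : ℤ))} : Set (LaurentPolynomial R)) ∧
        T 1 * x ∈ Ideal.span ({T (N : ℤ) + T (-(N : ℤ))} : Set (LaurentPolynomial R))) := by

  have hsm : ∀ f g : LaurentPolynomial R, s (f * g) = s f * s g :=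
    mymul s (fun _ => (1 : R)) (by simp) (fun n => by rw [hs, one_smul])
  have hπm : ∀ f g : LaurentPolynomial R, π (f * g) = π f * π g :=
    mymul π (fun n => ((q2 ^ n : Rˣ) : R)) (fun m n => by show ((q2 ^ (m + n) : Rˣ) : R) = _; rw [zpow_add, Units.val_mul]) hπ
  have hTTc : ∀ f : LaurentPolynomial R, s f = f →
      ∀ g : LaurentPolynomial R, TT (f * g) = f * TT g := myTT t2 s TT hsm hT
  have main3 : ∀ f : LaurentPolynomial R, s f = f → ∀ c : R, π f = c • f →
      ∀ x ∈ Ideal.span ({f} : Set (LaurentPolynomial R)),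
        TT x ∈ Ideal.span ({f} : Set (LaurentPolynomial R)) ∧
        π x ∈ Ideal.span ({f} : Set (LaurentPolynomial R)) ∧
        π (TT x) ∈ Ideal.span ({f} : Set (LaurentPolynomial R)) ∧
        T 1 * x ∈ Ideal.span ({f} : Set (LaurentPolynomial R)) := by
    intro f hsf c hc x hx
    obtain ⟨g, rfl⟩ := Ideal.mem_span_singleton.mp hx
    refine ⟨Ideal.mem_span_singleton.mpr ⟨TT g, hTTc f hsf g⟩,
      Ideal.mem_span_singleton.mpr ⟨c • π g, ?_⟩,
      Ideal.mem_span_singleton.mpr ⟨c • π (TT g), ?_⟩,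
      Ideal.mem_span_singleton.mpr ⟨T 1 * g, mul_left_comm _ _ _⟩⟩
    · rw [hπm, hc, smul_mul_assoc, mul_smul_comm]
    · rw [hTTc f hsf g, hπm, hc, smul_mul_assoc, mul_smul_comm]
  refine ⟨⟨by simpa using hπ 0, hπm⟩, hTTc, main3, ?_⟩
  intro N hqN
  have hq : q2 ^ (N : ℤ) * q2 ^ (N : ℤ) = 1 := by
    rw [zpow_natCast, ← pow_add, ← two_mul]
    ext
    rw [Units.val_pow_eq_pow_val, hqN, Units.val_one]
  have hinv : q2 ^ (-(N : ℤ)) = q2 ^ (N : ℤ) := by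
    rw [zpow_neg]
    exact inv_eq_of_mul_eq_one_right hq
  have heig : π (T (N : ℤ) + T (-(N : ℤ))) =
      ((q2 ^ (N : ℤ) : Rˣ) : R) • (T (N : ℤ) + T (-(N : ℤ))) := by
    rw [map_add, hπ, hπ, neg_neg, hinv, ← smul_add, add_comm (T (-(N : ℤ)))]
  have hsfN : s (T (N : ℤ) + T (-(N : ℤ))) = T (N : ℤ) + T (-(N : ℤ)) := by
    rw [map_add, hs, hs, neg_neg, add_comm]
  exact ⟨heig, main3 _ hsfN _ heig⟩
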